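/- Let f : X → G(Z,C) and z* ∈ C⁻ \ {0}. For all x, u ∈ X, the lower Dini directional derivative with respect to z* satisfies f↓_{z*}(x,u) = {z ∈ Z | φ↓(x,u) ≤ -z*(z)}, where φ = φ_{f,z*} is the scalarization φ(x) = inf{-z*(z) | z ∈ f(x)} and φ↓ is its scalar lower Dini derivative. Moreover u ↦ f↓_{z*}(x,u) is positively homogeneous: f↓_{z*}(x, ru) = r f↓_{z*}(x,u) for r > 0. -/

import Mathlib

open Filter Set Pointwise

/-- Inf-addition on the extended reals. -/
noncomputable def infAdd (r s : EReal) : EReal :=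
  sInf {x : EReal | ∃ a b : ℝ, x = ((a + b : ℝ) : EReal) ∧ r ≤ (a : EReal) ∧ s ≤ (b : EReal)}

/-- Inf-residuation on the extended reals. -/
noncomputable def eResid (r s : EReal) : EReal :=
  sInf {x : EReal | ∃ t : ℝ, x = (t : EReal) ∧ r ≤ infAdd s (t : EReal)}

/-- Lower Dini directional derivative of `φ : X → EReal`. -/
noncomputable def vDini {X : Type*} [AddCommGroup X] [Module ℝ X]
    (φ : X → EReal) (x u : X) : EReal :=
  Filter.liminf (fun t : ℝ => ((1 / t : ℝ) : EReal) * eResid (φ (x + t • u)) (φ x))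
    (nhdsWithin 0 (Set.Ioi 0))

variable {X Z : Type*}

section Defs
variable [AddCommGroup Z] [Module ℝ Z] [TopologicalSpace Z]

/-- Scalarization of a set `A ⊆ Z` with respect to `z*`: `inf {-z*(z) | z ∈ A}`. -/
noncomputable def scalSet (zs : Z →L[ℝ] ℝ) (A : Set Z) : EReal :=
  sInf ((fun z : Z => ((-(zs z) : ℝ) : EReal)) '' A)

/-- The `z*`-residual `A -_{z*} B = {z | B + z ⊆ cl(A + H(z*))}`, `H(z*) = {w | z*(w) ≤ 0}`. -/
def zResid (zs : Z →L[ℝ] ℝ) (A B : Set Z) : Set Z :=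
  {z : Z | B + ({z} : Set Z) ⊆ closure (A + {w : Z | zs w ≤ 0})}

end Defs

/-- Lower Dini directional derivative of a set-valued map with respect to `z*`:
`f↓_{z*}(x,u) = ⋂_{s>0} cl ⋃_{t∈(0,s)} (1/t)(f(x+tu) -_{z*} f(x))`. -/
noncomputable def setDini [AddCommGroup X] [Module ℝ X]
    [AddCommGroup Z] [Module ℝ Z] [TopologicalSpace Z]
    (f : X → Set Z) (zs : Z →L[ℝ] ℝ) (x u : X) : Set Z :=
  ⋂ s ∈ Set.Ioi (0 : ℝ),
    closure (⋃ t ∈ Set.Ioo (0 : ℝ) s, (1 / t) • zResid zs (f (x + t • u)) (f x))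



section ERealAux

lemma exists_coe_lt {c : EReal} (hc : ⊥ < c) : ∃ x : ℝ, (x : EReal) < c := by
  induction c with
  | bot => exact absurd hc (lt_irrefl _)
  | coe y => exact ⟨y - 1, by exact_mod_cast sub_one_lt y⟩
  | top => exact ⟨0, EReal.coe_lt_top 0⟩

lemma le_coe_of_forall_add {x : EReal} {y : ℝ}
    (h : ∀ ε : ℝ, 0 < ε → x ≤ ((y + ε : ℝ) : EReal)) : x ≤ (y : EReal) := by
  induction x with
  | bot => exact bot_le
  | coe a =>
    refine EReal.coe_le_coe_iff.2 (le_of_forall_pos_le_add fun ε hε => ?_)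
    exact EReal.coe_le_coe_iff.1 (h ε hε)
  | top => exact absurd (h 1 one_pos) (EReal.coe_lt_top (y + 1)).not_ge

lemma infAdd_coe_coe (a b : ℝ) : infAdd (a : EReal) (b : EReal) = ((a + b : ℝ) : EReal) := by
  refine le_antisymm (sInf_le ⟨a, b, rfl, le_refl _, le_refl _⟩) (le_sInf ?_)
  rintro x ⟨c, d, rfl, hc, hd⟩
  exact EReal.coe_le_coe_iff.2 (add_le_add (EReal.coe_le_coe_iff.1 hc) (EReal.coe_le_coe_iff.1 hd))

lemma infAdd_top_left (s : EReal) : infAdd ⊤ s = ⊤ := by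
  unfold infAdd
  refine (congrArg sInf ?_).trans (sInf_empty (α := EReal))
  ext x
  simp only [mem_setOf_eq, mem_empty_iff_false, iff_false, not_exists]
  rintro a b ⟨-, ha, -⟩
  exact absurd ha (not_le.2 (EReal.coe_lt_top a))

lemma infAdd_bot_coe (b : ℝ) : infAdd ⊥ (b : EReal) = ⊥ := by
  unfold infAdd
  rw [sInf_eq_bot]
  intro c hc
  obtain ⟨x, hx⟩ := exists_coe_lt hc
  exact ⟨(x : EReal), ⟨x - b, b, by rw [sub_add_cancel], bot_le, le_refl _⟩, hx⟩

lemma infAdd_mono_left {s s' : EReal} (h : s ≤ s') (c : EReal) : infAdd s c ≤ infAdd s' c := by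
  refine sInf_le_sInf ?_
  rintro x ⟨a, b, hx, ha, hb⟩
  exact ⟨a, b, hx, h.trans ha, hb⟩

lemma eResid_le_coe_iff (r s : EReal) (c : ℝ) :
    eResid r s ≤ (c : EReal) ↔ r ≤ infAdd s (c : EReal) := by
  constructor
  · intro h
    induction s with
    | bot =>
      rw [infAdd_bot_coe, le_bot_iff]
      by_contra hr
      have : {x : EReal | ∃ t : ℝ, x = (t : EReal) ∧ r ≤ infAdd ⊥ (t : EReal)} = ∅ := by
        ext x
        simp only [mem_setOf_eq, mem_empty_iff_false, iff_false, not_exists]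
        rintro t ⟨-, hle⟩
        rw [infAdd_bot_coe, le_bot_iff] at hle
        exact hr hle
      rw [eResid, this, sInf_empty] at h
      exact absurd h (by simp)
    | coe s =>
      induction r with
      | bot => exact bot_le
      | coe r =>
        rw [infAdd_coe_coe, EReal.coe_le_coe_iff]
        have : eResid (r : EReal) (s : EReal) = ((r - s : ℝ) : EReal) := by
          refine le_antisymm (sInf_le ⟨r - s, rfl, ?_⟩) (le_sInf ?_)
          · rw [infAdd_coe_coe]
            exact EReal.coe_le_coe_iff.2 (by linarith)
          · rintro x ⟨t, rfl, hle⟩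
            rw [infAdd_coe_coe, EReal.coe_le_coe_iff] at hle
            exact EReal.coe_le_coe_iff.2 (by linarith)
        rw [this, EReal.coe_le_coe_iff] at h
        linarith
      | top =>
        exfalso
        have : {x : EReal | ∃ t : ℝ, x = (t : EReal) ∧ (⊤ : EReal) ≤ infAdd (s : EReal) (t : EReal)} = ∅ := by
          ext x
          simp only [mem_setOf_eq, mem_empty_iff_false, iff_false, not_exists]
          rintro t ⟨-, hle⟩
          rw [infAdd_coe_coe] at hle
          exact absurd hle (EReal.coe_lt_top (s + t)).not_ge
        rw [eResid, this, sInf_empty] at h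
        exact absurd h (by simp)
    | top => rw [infAdd_top_left]; exact le_top
  · intro h
    exact sInf_le ⟨c, rfl, h⟩

lemma le_infAdd_sInf_iff (x : EReal) (T : Set ℝ) (c : ℝ) :
    x ≤ infAdd (sInf ((fun a : ℝ => (a : EReal)) '' T)) (c : EReal) ↔
      ∀ a ∈ T, x ≤ ((a + c : ℝ) : EReal) := by
  constructor
  · intro h a ha
    refine h.trans ?_
    have h1 : sInf ((fun a : ℝ => (a : EReal)) '' T) ≤ (a : EReal) := sInf_le ⟨a, ha, rfl⟩
    exact (infAdd_mono_left h1 _).trans (le_of_eq (infAdd_coe_coe a c))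
  · intro h
    refine le_sInf ?_
    rintro y ⟨a, b, rfl, ha, hb⟩
    have key : x ≤ ((a + c : ℝ) : EReal) := by
      refine le_coe_of_forall_add fun ε hε => ?_
      have hlt : sInf ((fun a : ℝ => (a : EReal)) '' T) < ((a + ε : ℝ) : EReal) :=
        lt_of_le_of_lt ha (by exact_mod_cast lt_add_of_pos_right a hε)
      obtain ⟨e, ⟨a', ha', rfl⟩, he⟩ := sInf_lt_iff.1 hlt
      refine (h a' ha').trans ?_
      have : a' + c ≤ a + c + ε := by
        have := EReal.coe_lt_coe_iff.1 he
        linarith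
      exact_mod_cast this
    refine key.trans ?_
    have : a + c ≤ a + b := by linarith [EReal.coe_le_coe_iff.1 hb]
    exact_mod_cast this

lemma le_coe_mul_iff (x : EReal) {t : ℝ} (c : ℝ) (ht : 0 < t) :
    x ≤ ((t * c : ℝ) : EReal) ↔ ((1 / t : ℝ) : EReal) * x ≤ (c : EReal) := by
  induction x with
  | bot =>
    rw [EReal.coe_mul_bot_of_pos (by positivity : (0:ℝ) < 1 / t)]
    simp
  | coe a =>
    rw [← EReal.coe_mul, EReal.coe_le_coe_iff, EReal.coe_le_coe_iff]
    rw [div_mul_eq_mul_div, one_mul, div_le_iff₀ ht]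
    constructor
    · intro h; linarith [mul_comm t c]
    · intro h; calc a ≤ c * t := h
        _ = t * c := mul_comm c t
  | top =>
    rw [EReal.coe_mul_top_of_pos (by positivity : (0:ℝ) < 1 / t)]
    exact iff_of_false (EReal.coe_lt_top (t * c)).not_ge (EReal.coe_lt_top c).not_ge

lemma coe_mul_le_coe_iff (x : EReal) {r : ℝ} (c : ℝ) (hr : 0 < r) :
    (r : EReal) * x ≤ (c : EReal) ↔ x ≤ ((r⁻¹ * c : ℝ) : EReal) := by
  induction x with
  | bot =>
    rw [EReal.coe_mul_bot_of_pos (by exact_mod_cast hr)]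
    simp
  | coe a =>
    rw [← EReal.coe_mul, EReal.coe_le_coe_iff, EReal.coe_le_coe_iff]
    rw [le_inv_mul_iff₀ hr]
  | top =>
    rw [EReal.coe_mul_top_of_pos (by exact_mod_cast hr)]
    exact iff_of_false (EReal.coe_lt_top c).not_ge (EReal.coe_lt_top (r⁻¹ * c)).not_ge

noncomputable def erealMulIso (r : ℝ) (hr : 0 < r) : EReal ≃o EReal where
  toFun x := (r : EReal) * x
  invFun x := ((r⁻¹ : ℝ) : EReal) * x
  left_inv x := by
    show ((r⁻¹ : ℝ) : EReal) * ((r : EReal) * x) = x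
    rw [← mul_assoc, ← EReal.coe_mul, inv_mul_cancel₀ hr.ne', EReal.coe_one, one_mul]
  right_inv x := by
    show (r : EReal) * (((r⁻¹ : ℝ) : EReal) * x) = x
    rw [← mul_assoc, ← EReal.coe_mul, mul_inv_cancel₀ hr.ne', EReal.coe_one, one_mul]
  map_rel_iff' := by
    intro a b
    show (r : EReal) * a ≤ (r : EReal) * b ↔ a ≤ b
    constructor
    · intro h
      have h2 := mul_le_mul_of_nonneg_left h
        (by exact_mod_cast (inv_pos.2 hr).le : (0:EReal) ≤ ((r⁻¹ : ℝ) : EReal))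
      rwa [← mul_assoc, ← mul_assoc, ← EReal.coe_mul, inv_mul_cancel₀ hr.ne',
        EReal.coe_one, one_mul, one_mul] at h2
    · intro h
      exact mul_le_mul_of_nonneg_left h (by exact_mod_cast hr.le : (0:EReal) ≤ (r : EReal))

lemma coe_mul_iInf_Ioo (r : ℝ) (hr : 0 < r) (g : ℝ → EReal) (s : Set ℝ) :
    ⨅ t ∈ s, (r : EReal) * g t = (r : EReal) * ⨅ t ∈ s, g t := by
  have h := (erealMulIso r hr).map_sInf (g '' s)
  have h1 : sInf (g '' s) = ⨅ t ∈ s, g t := sInf_image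
  have h2 : ⨅ a ∈ g '' s, (erealMulIso r hr) a = ⨅ t ∈ s, (r : EReal) * g t := iInf_image
  rw [h1, h2] at h
  exact h.symm

end ERealAux

section Geo
variable [AddCommGroup Z] [Module ℝ Z] [TopologicalSpace Z]
  [IsTopologicalAddGroup Z] [ContinuousSMul ℝ Z]

lemma closure_exists_le (zs : Z →L[ℝ] ℝ) (hzs0 : zs ≠ 0) (S : Set EReal) :
    closure {z : Z | ∃ e ∈ S, e ≤ ((-(zs z) : ℝ) : EReal)} =
      {z : Z | sInf S ≤ ((-(zs z) : ℝ) : EReal)} := by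
  obtain ⟨w0, hw0⟩ : ∃ w, zs w ≠ 0 := by
    by_contra hcon
    push_neg at hcon
    exact hzs0 (ContinuousLinearMap.ext fun w => by simp [hcon w])
  set w : Z := (zs w0)⁻¹ • w0 with hwdef
  have hzw : zs w = 1 := by
    rw [hwdef, map_smul, smul_eq_mul, inv_mul_cancel₀ hw0]
  apply subset_antisymm
  · refine closure_minimal ?_ ?_
    · rintro z ⟨e, heS, he⟩
      exact le_trans (sInf_le heS) he
    · have hcont : Continuous fun z : Z => ((-(zs z) : ℝ) : EReal) :=
        continuous_coe_real_ereal.comp (zs.continuous.neg)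
      exact (isClosed_Ici (a := sInf S)).preimage hcont
  · intro z hz
    simp only [mem_setOf_eq] at hz
    have htend : Tendsto (fun ε : ℝ => z - ε • w) (nhdsWithin 0 (Ioi 0)) (nhds z) := by
      have hc : Continuous fun ε : ℝ => z - ε • w :=
        continuous_const.sub (continuous_id.smul continuous_const)
      have h0 : Tendsto (fun ε : ℝ => z - ε • w) (nhds 0) (nhds z) := by
        simpa using hc.tendsto 0
      exact h0.mono_left nhdsWithin_le_nhds
    refine mem_closure_of_tendsto htend ?_
    filter_upwards [self_mem_nhdsWithin] with ε hε
    have hε' : (0:ℝ) < ε := hε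
    have hval : -(zs (z - ε • w)) = -(zs z) + ε := by
      rw [map_sub, map_smul, smul_eq_mul, hzw, mul_one]; ring
    have hlt : sInf S < ((-(zs z) + ε : ℝ) : EReal) :=
      lt_of_le_of_lt hz (EReal.coe_lt_coe_iff.2 (by linarith))
    obtain ⟨e, heS, he⟩ := sInf_lt_iff.1 hlt
    exact ⟨e, heS, by rw [hval]; exact he.le⟩

lemma closure_add_half (zs : Z →L[ℝ] ℝ) (hzs0 : zs ≠ 0) (A : Set Z) :
    closure (A + {w : Z | zs w ≤ 0}) = {y : Z | scalSet zs A ≤ ((-(zs y) : ℝ) : EReal)} := by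
  have hset : A + {w : Z | zs w ≤ 0} =
      {y : Z | ∃ e ∈ (fun a : Z => ((-(zs a) : ℝ) : EReal)) '' A,
        e ≤ ((-(zs y) : ℝ) : EReal)} := by
    ext y
    rw [Set.mem_add, mem_setOf_eq]
    constructor
    · rintro ⟨a, ha, h, hh, rfl⟩
      have hh' : zs h ≤ 0 := hh
      refine ⟨_, ⟨a, ha, rfl⟩, ?_⟩
      refine EReal.coe_le_coe_iff.2 ?_
      rw [map_add]; linarith
    · rintro ⟨e, ⟨a, ha, rfl⟩, he⟩
      have he' : -(zs a) ≤ -(zs y) := EReal.coe_le_coe_iff.1 he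
      refine ⟨a, ha, y - a, ?_, by abel⟩
      show zs (y - a) ≤ 0
      rw [map_sub]; linarith
  rw [hset, closure_exists_le zs hzs0]
  rfl

lemma mem_zResid_iff (zs : Z →L[ℝ] ℝ) (hzs0 : zs ≠ 0) (A B : Set Z) (z : Z) :
    z ∈ zResid zs A B ↔
      ∀ b ∈ B, scalSet zs A ≤ ((-(zs b) + -(zs z) : ℝ) : EReal) := by
  show B + ({z} : Set Z) ⊆ _ ↔ _
  constructor
  · intro h b hb
    have hmem : b + z ∈ B + ({z} : Set Z) := Set.add_mem_add hb rfl
    have h2 := h hmem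
    rw [closure_add_half zs hzs0, mem_setOf_eq] at h2
    have : -(zs (b + z)) = -(zs b) + -(zs z) := by rw [map_add]; ring
    rwa [this] at h2
  · intro h y hy
    rw [closure_add_half zs hzs0, mem_setOf_eq]
    obtain ⟨b, hb, z', hz', heq⟩ := Set.mem_add.1 hy
    rw [mem_singleton_iff] at hz'
    have hy2 : y = b + z := by rw [← heq, hz']
    rw [hy2]
    have h2 := h b hb
    have : -(zs (b + z)) = -(zs b) + -(zs z) := by rw [map_add]; ring
    rwa [this]

lemma mem_zResid_iff' (zs : Z →L[ℝ] ℝ) (hzs0 : zs ≠ 0) (A B : Set Z) (z : Z) :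
    z ∈ zResid zs A B ↔
      eResid (scalSet zs A) (scalSet zs B) ≤ ((-(zs z) : ℝ) : EReal) := by
  rw [mem_zResid_iff zs hzs0, eResid_le_coe_iff]
  have himg : scalSet zs B =
      sInf ((fun a : ℝ => (a : EReal)) '' ((fun b : Z => -(zs b)) '' B)) := by
    rw [scalSet, ← Set.image_comp]
    rfl
  rw [himg, le_infAdd_sInf_iff, Set.forall_mem_image]

lemma mem_smul_zResid (zs : Z →L[ℝ] ℝ) (hzs0 : zs ≠ 0) (A B : Set Z) {t : ℝ}
    (ht : 0 < t) (z : Z) :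
    z ∈ (1 / t) • zResid zs A B ↔
      ((1 / t : ℝ) : EReal) * eResid (scalSet zs A) (scalSet zs B) ≤
        ((-(zs z) : ℝ) : EReal) := by
  have hne : (1 / t : ℝ) ≠ 0 := by positivity
  have hinv : ((1 / t : ℝ))⁻¹ • z = t • z := by rw [one_div, inv_inv]
  have hval : -(zs (t • z)) = t * (-(zs z)) := by
    rw [map_smul, smul_eq_mul]; ring
  rw [Set.mem_smul_set_iff_inv_smul_mem₀ hne, hinv, mem_zResid_iff' zs hzs0, hval,
    le_coe_mul_iff _ _ ht]

lemma setDini_char [AddCommGroup X] [Module ℝ X] (zs : Z →L[ℝ] ℝ) (hzs0 : zs ≠ 0)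
    (f : X → Set Z) (x u : X) (z : Z) :
    z ∈ setDini f zs x u ↔ ∀ s : ℝ, 0 < s →
      (⨅ t ∈ Ioo (0:ℝ) s,
        ((1 / t : ℝ) : EReal) * eResid (scalSet zs (f (x + t • u))) (scalSet zs (f x)))
        ≤ ((-(zs z) : ℝ) : EReal) := by
  unfold setDini
  simp only [mem_iInter, mem_Ioi]
  refine forall_congr' fun s => forall_congr' fun hs => ?_
  set g : ℝ → EReal := fun t =>
    ((1 / t : ℝ) : EReal) * eResid (scalSet zs (f (x + t • u))) (scalSet zs (f x)) with hg
  have hU : (⋃ t ∈ Ioo (0:ℝ) s, (1 / t) • zResid zs (f (x + t • u)) (f x)) =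
      {y : Z | ∃ e ∈ g '' Ioo (0:ℝ) s, e ≤ ((-(zs y) : ℝ) : EReal)} := by
    ext y
    simp only [mem_iUnion, mem_setOf_eq]
    constructor
    · rintro ⟨t, ht, hy⟩
      exact ⟨g t, ⟨t, ht, rfl⟩, (mem_smul_zResid zs hzs0 _ _ ht.1 y).1 hy⟩
    · rintro ⟨e, ⟨t, ht, rfl⟩, he⟩
      exact ⟨t, ht, (mem_smul_zResid zs hzs0 _ _ ht.1 y).2 he⟩
  rw [hU, closure_exists_le zs hzs0, mem_setOf_eq, sInf_image]

end Geo

set_option linter.unusedSectionVars false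

section Main
variable [AddCommGroup X] [Module ℝ X]
  [AddCommGroup Z] [Module ℝ Z] [TopologicalSpace Z]
  [IsTopologicalAddGroup Z] [ContinuousSMul ℝ Z]

lemma vDini_char (zs : Z →L[ℝ] ℝ) (f : X → Set Z) (x u : X) :
    vDini (fun y : X => scalSet zs (f y)) x u =
      ⨆ s : ℝ, ⨆ (_ : (0:ℝ) < s), ⨅ t ∈ Ioo (0:ℝ) s,
        ((1 / t : ℝ) : EReal) * eResid (scalSet zs (f (x + t • u))) (scalSet zs (f x)) :=
  (nhdsGT_basis (0:ℝ)).liminf_eq_iSup_iInf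

theorem setDini_scalarization_and_posHom'
    (zs : Z →L[ℝ] ℝ) (hzs0 : zs ≠ 0)
    (f : X → Set Z) (x u : X) :
    setDini f zs x u =
      {z : Z | vDini (fun y : X => scalSet zs (f y)) x u ≤ ((-(zs z) : ℝ) : EReal)} ∧
    (∀ r : ℝ, 0 < r → setDini f zs x (r • u) = r • setDini f zs x u) := by
  constructor
  · ext z
    rw [mem_setOf_eq, vDini_char zs f x u, iSup₂_le_iff]
    exact setDini_char zs hzs0 f x u z
  · intro r hr
    ext z
    rw [setDini_char zs hzs0 f x (r • u) z,
      Set.mem_smul_set_iff_inv_smul_mem₀ hr.ne' _ z, setDini_char zs hzs0 f x u]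
    have hc : (-(zs (r⁻¹ • z)) : ℝ) = r⁻¹ * (-(zs z)) := by
      rw [map_smul, smul_eq_mul]; ring
    rw [hc]
    have key : ∀ s : ℝ, 0 < s →
        (((⨅ t ∈ Ioo (0:ℝ) s, ((1 / t : ℝ) : EReal) *
            eResid (scalSet zs (f (x + t • (r • u)))) (scalSet zs (f x)))
          ≤ ((-(zs z) : ℝ) : EReal)) ↔
          ((⨅ τ ∈ Ioo (0:ℝ) (r * s), ((1 / τ : ℝ) : EReal) *
            eResid (scalSet zs (f (x + τ • u))) (scalSet zs (f x)))
          ≤ ((r⁻¹ * (-(zs z)) : ℝ) : EReal))) := by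
      intro s hs
      have h1 : ∀ t : ℝ, ((1 / t : ℝ) : EReal) *
          eResid (scalSet zs (f (x + t • (r • u)))) (scalSet zs (f x))
          = (r : EReal) * (((1 / (r * t) : ℝ) : EReal) *
            eResid (scalSet zs (f (x + (r * t) • u))) (scalSet zs (f x))) := by
        intro t
        have harg : x + t • (r • u) = x + (r * t) • u := by
          rw [smul_smul, mul_comm]
        have hco : r * (1 / (r * t)) = 1 / t := by
          rw [one_div, mul_inv, ← mul_assoc, mul_inv_cancel₀ hr.ne', one_mul, one_div]
        rw [harg, ← mul_assoc, ← EReal.coe_mul, hco]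
      have h2 : (⨅ t ∈ Ioo (0:ℝ) s, ((1 / t : ℝ) : EReal) *
            eResid (scalSet zs (f (x + t • (r • u)))) (scalSet zs (f x)))
          = (r : EReal) * ⨅ t ∈ Ioo (0:ℝ) s, (((1 / (r * t) : ℝ) : EReal) *
            eResid (scalSet zs (f (x + (r * t) • u))) (scalSet zs (f x))) := by
        rw [← coe_mul_iInf_Ioo r hr]
        exact iInf_congr fun t => iInf_congr fun ht => h1 t
      have h3 : (⨅ t ∈ Ioo (0:ℝ) s, (((1 / (r * t) : ℝ) : EReal) *
            eResid (scalSet zs (f (x + (r * t) • u))) (scalSet zs (f x))))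
          = ⨅ τ ∈ Ioo (0:ℝ) (r * s), ((1 / τ : ℝ) : EReal) *
            eResid (scalSet zs (f (x + τ • u))) (scalSet zs (f x)) := by
        calc (⨅ t ∈ Ioo (0:ℝ) s, (((1 / (r * t) : ℝ) : EReal) *
              eResid (scalSet zs (f (x + (r * t) • u))) (scalSet zs (f x))))
            = ⨅ c ∈ (fun t : ℝ => r * t) '' Ioo (0:ℝ) s, ((1 / c : ℝ) : EReal) *
              eResid (scalSet zs (f (x + c • u))) (scalSet zs (f x)) :=
            (iInf_image (f := fun t : ℝ => r * t)
              (g := fun c : ℝ => ((1 / c : ℝ) : EReal) *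
                eResid (scalSet zs (f (x + c • u))) (scalSet zs (f x)))
              (t := Ioo (0:ℝ) s)).symm
          _ = _ := by rw [image_mul_left_Ioo hr, mul_zero]
      rw [h2, h3]
      exact coe_mul_le_coe_iff _ _ hr
    constructor
    · intro h s hs
      have h2 := (key (r⁻¹ * s) (by positivity)).1 (h (r⁻¹ * s) (by positivity))
      rwa [← mul_assoc, mul_inv_cancel₀ hr.ne', one_mul] at h2
    · intro h s hs
      exact (key s hs).2 (h (r * s) (by positivity))

end Main

/-- Scalarization formula and positive homogeneity of the `z*`-lower Dini directional
derivative of a `G(Z,C)`-valued map. -/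
theorem setDini_scalarization_and_posHom
    [AddCommGroup X] [Module ℝ X]
    [AddCommGroup Z] [Module ℝ Z] [TopologicalSpace Z]
    [IsTopologicalAddGroup Z] [ContinuousSMul ℝ Z] [LocallyConvexSpace ℝ Z]
    (C : Set Z) (hCclosed : IsClosed C) (hCconv : Convex ℝ C) (hC0 : (0 : Z) ∈ C)
    (hCcone : ∀ c ∈ C, ∀ t : ℝ, 0 < t → t • c ∈ C)
    (zs : Z →L[ℝ] ℝ) (hzs : ∀ c ∈ C, zs c ≤ 0) (hzs0 : zs ≠ 0)
    (f : X → Set Z) (hf : ∀ x : X, f x = closure (convexHull ℝ (f x + C)))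
    (x u : X) :
    setDini f zs x u =
      {z : Z | vDini (fun y : X => scalSet zs (f y)) x u ≤ ((-(zs z) : ℝ) : EReal)} ∧
    (∀ r : ℝ, 0 < r → setDini f zs x (r • u) = r • setDini f zs x u) :=
  setDini_scalarization_and_posHom' zs hzs0 f x u
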